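/- Let d ≥ 2 be an integer, 1 < α < 2, 0 < ε < α − 1, κ > 0, and t₀ ∈ ℝ. Define b : ℝ^{d+1} → [0,∞] by b(t,x) := κ |t − t₀|^{−(α−1)/α} for t ≠ t₀ (any value at t = t₀). Then there exists a constant c ∈ (0,∞), depending only on α and ε, such that ‖b^{1/(α−1)}‖_{E_{1+ε}} = c · κ^{1/(α−1)}. In particular, the parabolic Morrey norm ‖b^{1/(α−1)}‖_{E_{1+ε}} is finite and proportional to κ^{1/(α−1)}. -/

import Mathlib

open MeasureTheory ENNReal Set Filter

noncomputable section

/-- The spatial space `ℝ^d`. -/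
abbrev Spc (d : ℕ) := EuclideanSpace ℝ (Fin d)

/-- Parabolic cylinder `C_ρ(t,x) = {(s,y) : t ≤ s ≤ t + ρ^α, |y - x| ≤ ρ}`. -/
def cylP (d : ℕ) (α ρ t : ℝ) (x : Spc d) : Set (ℝ × Spc d) :=
  {p | t ≤ p.1 ∧ p.1 ≤ t + ρ ^ α ∧ dist p.2 x ≤ ρ}

/-- Average of `f` over the parabolic cylinder `C_ρ(t,x)`. -/
def cylAvg (d : ℕ) (α ρ t : ℝ) (x : Spc d) (f : ℝ × Spc d → ℝ≥0∞) : ℝ≥0∞ :=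
  (volume (cylP d α ρ t x))⁻¹ * ∫⁻ p in cylP d α ρ t x, f p

/-- Parabolic Morrey norm `‖v‖_{E_q}`. -/
def morreyE (d : ℕ) (α q : ℝ) (v : ℝ × Spc d → ℝ≥0∞) : ℝ≥0∞ :=
  ⨆ (ρ : ℝ) (_ : 0 < ρ) (t : ℝ) (x : Spc d),
    ENNReal.ofReal ρ * (cylAvg d α ρ t x (fun p => v p ^ q)) ^ (1 / q)

/-- Elliptic Morrey norm `‖w‖_{M_q}` on `ℝ^d`. -/
def morreyM (d : ℕ) (q : ℝ) (w : Spc d → ℝ≥0∞) : ℝ≥0∞ :=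
  ⨆ (ρ : ℝ) (_ : 0 < ρ) (x : Spc d),
    ENNReal.ofReal ρ *
      ((volume (Metric.closedBall x ρ))⁻¹ *
        ∫⁻ y in Metric.closedBall x ρ, w y ^ q) ^ (1 / q)

/-- Fractional (parabolic) maximal function `M_β f(t,x)`. -/
def maxFun (d : ℕ) (α β : ℝ) (f : ℝ × Spc d → ℝ≥0∞) (t : ℝ) (x : Spc d) : ℝ≥0∞ :=
  ⨆ (ρ : ℝ) (_ : 0 < ρ), ENNReal.ofReal (ρ ^ β) * cylAvg d α ρ t x f

/-- Uncentered parabolic maximal function `M̂ f(z)`, sup over all parabolic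
cylinders containing `z`. -/
def hatM (d : ℕ) (α : ℝ) (f : ℝ × Spc d → ℝ≥0∞) (z : ℝ × Spc d) : ℝ≥0∞ :=
  ⨆ (ρ : ℝ) (_ : 0 < ρ) (t : ℝ) (x : Spc d) (_ : z ∈ cylP d α ρ t x),
    cylAvg d α ρ t x f

/-- The kernel `p_γ(s,y) = 1_{s>0} s^{γ/2} min(|y|^{-d-α}, s^{-(d+α)/α})`. -/
def pKer (d : ℕ) (α γ : ℝ) (s : ℝ) (y : Spc d) : ℝ≥0∞ :=
  if 0 < s then
    (if s ^ (1 / α) ≤ ‖y‖ then ENNReal.ofReal (s ^ (γ / 2) * ‖y‖ ^ (-(d : ℝ) - α))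
     else ENNReal.ofReal (s ^ (γ / 2 - ((d : ℝ) + α) / α)))
  else 0

/-- `P_γ f(t,x) = ∫ p_γ(s,y) f(t+s, x+y) dy ds`. -/
def Pop (d : ℕ) (α γ : ℝ) (f : ℝ × Spc d → ℝ≥0∞) (t : ℝ) (x : Spc d) : ℝ≥0∞ :=
  ∫⁻ p : ℝ × Spc d, pKer d α γ p.1 p.2 * f (t + p.1, x + p.2)

/-- `P*_γ f(t,x) = ∫ p_γ(s,y) f(t-s, x+y) dy ds`. -/
def PopStar (d : ℕ) (α γ : ℝ) (f : ℝ × Spc d → ℝ≥0∞) (t : ℝ) (x : Spc d) : ℝ≥0∞ :=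
  ∫⁻ p : ℝ × Spc d, pKer d α γ p.1 p.2 * f (t - p.1, x + p.2)



namespace Stmt15Aux

open intervalIntegral

lemma rpow_add_le {x y t : ℝ} (hx : 0 ≤ x) (hy : 0 ≤ y) (ht : 0 ≤ t) (ht1 : t ≤ 1) :
    (x + y) ^ t ≤ x ^ t + y ^ t := by
  have h := NNReal.rpow_add_le_add_rpow x.toNNReal y.toNNReal ht ht1
  rw [← Real.toNNReal_add hx hy] at h
  have h2 := NNReal.coe_le_coe.2 h
  rwa [NNReal.coe_rpow, NNReal.coe_add, NNReal.coe_rpow, NNReal.coe_rpow,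
    Real.coe_toNNReal _ (by positivity), Real.coe_toNNReal _ hx, Real.coe_toNNReal _ hy] at h2

variable {p : ℝ}

lemma integrable_abs_rpow (hp1 : p < 1) (a b : ℝ) :
    IntervalIntegrable (fun s => |s| ^ (-p)) volume a b := by
  have h : ∀ c : ℝ, 0 ≤ c → IntervalIntegrable (fun s : ℝ => |s| ^ (-p)) volume 0 c := by
    intro c hc
    have h0 : IntervalIntegrable (fun s : ℝ => s ^ (-p)) volume 0 c :=
      intervalIntegrable_rpow' (by linarith)
    rw [intervalIntegrable_iff, uIoc_of_le hc] at h0 ⊢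
    exact h0.congr_fun (fun s hs => by rw [abs_of_pos hs.1]) measurableSet_Ioc
  have hneg : ∀ c : ℝ, IntervalIntegrable (fun s : ℝ => |s| ^ (-p)) volume 0 c := by
    intro c
    rcases le_total 0 c with hc | hc
    · exact h c hc
    · have h2 := h (-c) (by linarith)
      rw [IntervalIntegrable.iff_comp_neg]
      have : (fun x : ℝ => |(-x)| ^ (-p)) = fun s : ℝ => |s| ^ (-p) := by
        funext x; rw [abs_neg]
      simpa [this] using h2
  exact (hneg a).symm.trans (hneg b)

lemma integral_abs_rpow_nonneg (hp1 : p < 1) {a b : ℝ} (ha : 0 ≤ a) (hab : a ≤ b) :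
    ∫ s in a..b, |s| ^ (-p) = (b ^ (1 - p) - a ^ (1 - p)) / (1 - p) := by
  have h1 : ∫ s in a..b, |s| ^ (-p) = ∫ s in a..b, s ^ (-p) := by
    apply integral_congr
    intro s hs
    rw [uIcc_of_le hab] at hs
    simp only []
    rw [abs_of_nonneg (ha.trans hs.1)]
  rw [h1, integral_rpow (Or.inl (by linarith : (-1 : ℝ) < -p)),
    show -p + 1 = 1 - p by ring]

lemma integral_abs_rpow_symm (hp1 : p < 1) {a b : ℝ} (ha : a ≤ 0) (hb : 0 ≤ b) :
    ∫ s in a..b, |s| ^ (-p) = ((-a) ^ (1 - p) + b ^ (1 - p)) / (1 - p) := by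
  have hsplit := integral_add_adjacent_intervals
      (integrable_abs_rpow hp1 a 0) (integrable_abs_rpow hp1 0 b)
  have hneg : ∫ s in a..(0:ℝ), |s| ^ (-p) = ∫ s in (0:ℝ)..(-a), |s| ^ (-p) := by
    have h3 := integral_comp_neg (a := (0:ℝ)) (b := -a) (fun s : ℝ => |s| ^ (-p))
    simp only [abs_neg, neg_neg, neg_zero] at h3
    exact h3.symm
  rw [← hsplit, hneg, integral_abs_rpow_nonneg hp1 le_rfl (by linarith),
      integral_abs_rpow_nonneg hp1 le_rfl hb, Real.zero_rpow (by linarith : 1 - p ≠ 0)]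
  ring

lemma two_rpow_bound {L t : ℝ} (hL : 0 ≤ L) (ht0 : 0 < t) (ht1 : t ≤ 1) :
    L ^ t ≤ 2 * (L / 2) ^ t := by
  have h := rpow_add_le (x := L / 2) (y := L / 2) (by linarith) (by linarith) ht0.le ht1
  calc L ^ t = (L / 2 + L / 2) ^ t := by ring_nf
    _ ≤ (L / 2) ^ t + (L / 2) ^ t := h
    _ = 2 * (L / 2) ^ t := by ring

lemma concave_bound {x y t : ℝ} (hx : 0 ≤ x) (hy : 0 ≤ y) (ht0 : 0 < t) (ht1 : t ≤ 1) :
    x ^ t + y ^ t ≤ 2 * ((x + y) / 2) ^ t := by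
  have hcc := Real.concaveOn_rpow ht0.le ht1
  have h := hcc.2 (mem_Ici.2 hx) (mem_Ici.2 hy)
      (by norm_num : (0:ℝ) ≤ 1/2) (by norm_num : (0:ℝ) ≤ 1/2) (by norm_num)
  simp only [smul_eq_mul] at h
  have he : (1/2 : ℝ) * x + (1/2) * y = (x + y) / 2 := by ring
  rw [he] at h
  linarith

/-- Key bound: the integral over any interval of length `L` is at most the symmetric value. -/
lemma integral_abs_rpow_le (hp0 : 0 < p) (hp1 : p < 1) {L : ℝ} (hL : 0 < L) (a : ℝ) :
    ∫ s in a..(a + L), |s| ^ (-p) ≤ 2 * (L / 2) ^ (1 - p) / (1 - p) := by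
  set t := 1 - p with htdef
  have ht0 : 0 < t := by simp [htdef]; linarith
  have ht1 : t ≤ 1 := by simp [htdef]; linarith
  have hcase1 : ∀ a : ℝ, 0 ≤ a → ∫ s in a..(a + L), |s| ^ (-p) ≤ 2 * (L / 2) ^ t / t := by
    intro a ha
    rw [integral_abs_rpow_nonneg hp1 ha (by linarith)]
    have h1 : (a + L) ^ t ≤ a ^ t + L ^ t := rpow_add_le ha hL.le ht0.le ht1
    have h2 : L ^ t ≤ 2 * (L / 2) ^ t := two_rpow_bound hL.le ht0 ht1
    have hnum : (a + L) ^ t - a ^ t ≤ 2 * (L / 2) ^ t := by linarith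
    gcongr
  rcases le_or_gt 0 a with ha | ha
  · exact hcase1 a ha
  rcases le_or_gt (a + L) 0 with hb | hb
  · have h3 := integral_comp_neg (a := -(a + L)) (b := -a) (fun s : ℝ => |s| ^ (-p))
    simp only [abs_neg, neg_neg] at h3
    have h4 : ∫ s in a..(a+L), |s| ^ (-p) = ∫ s in (-(a+L))..(-(a+L) + L), |s| ^ (-p) := by
      rw [show -(a+L) + L = -a by ring, ← h3]
    rw [h4]
    exact hcase1 (-(a+L)) (by linarith)
  · rw [integral_abs_rpow_symm hp1 ha.le hb.le]
    have h5 : (-a) ^ t + (a + L) ^ t ≤ 2 * (L / 2) ^ t := by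
      have h6 := concave_bound (x := -a) (y := a + L) (by linarith) hb.le ht0 ht1
      rwa [show -a + (a + L) = L by ring] at h6
    gcongr

lemma integral_abs_rpow_center (hp0 : 0 < p) (hp1 : p < 1) {L : ℝ} (hL : 0 < L) :
    ∫ s in (-(L/2))..(-(L/2) + L), |s| ^ (-p) = 2 * (L / 2) ^ (1 - p) / (1 - p) := by
  rw [show -(L/2) + L = L/2 by ring,
    integral_abs_rpow_symm hp1 (by linarith) (by linarith), neg_neg]
  ring

/-- Convert the time lintegral over `Icc a (a+L)` to an interval integral of `|s|^(-p)`. -/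
lemma lintegral_time (hp1 : p < 1) (t₀ a L : ℝ) (hL : 0 ≤ L) :
    ∫⁻ s in Icc a (a + L), ENNReal.ofReal (|s - t₀| ^ (-p)) =
      ENNReal.ofReal (∫ s in (a - t₀)..(a - t₀ + L), |s| ^ (-p)) := by
  have hint : IntervalIntegrable (fun s : ℝ => |s - t₀| ^ (-p)) volume a (a + L) := by
    have h := (integrable_abs_rpow hp1 (a - t₀) (a - t₀ + L)).comp_sub_right t₀
    have he : a - t₀ + t₀ = a := by ring
    have he2 : a - t₀ + L + t₀ = a + L := by ring
    rw [he, he2] at h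
    exact h
  have h2 : ∫ s in (a - t₀)..(a - t₀ + L), |s| ^ (-p)
      = ∫ s in a..(a + L), |s - t₀| ^ (-p) := by
    rw [integral_comp_sub_right (fun s : ℝ => |s| ^ (-p)) t₀]
    congr 1 <;> ring
  rw [h2, integral_of_le (by linarith)]
  rw [intervalIntegrable_iff, uIoc_of_le (by linarith : a ≤ a + L)] at hint
  rw [← Measure.restrict_congr_set Ioc_ae_eq_Icc]
  exact (ofReal_integral_eq_lintegral_ofReal hint
    (Filter.Eventually.of_forall fun s => Real.rpow_nonneg (abs_nonneg _) _)).symm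

/-- The cylinder average of a function depending (a.e.) only on time. -/
lemma cylAvg_eq {d : ℕ} {α ρ : ℝ} (hρ : 0 < ρ) (t : ℝ) (x : Spc d)
    (g : ℝ → ℝ≥0∞) (hg : Measurable g) (f : ℝ × Spc d → ℝ≥0∞)
    (hf : ∀ᵐ z ∂(volume : Measure (ℝ × Spc d)), f z = g z.1) :
    cylAvg d α ρ t x f =
      (ENNReal.ofReal (ρ ^ α))⁻¹ * ∫⁻ s in Icc t (t + ρ ^ α), g s := by
  have hset : cylP d α ρ t x = Icc t (t + ρ ^ α) ×ˢ Metric.closedBall x ρ := by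
    ext z
    simp [cylP, Set.mem_prod, Metric.mem_closedBall, and_assoc]
  set V := volume (Metric.closedBall x ρ) with hV
  have hV0 : V ≠ 0 := (Metric.measure_closedBall_pos volume x hρ).ne'
  have hVtop : V ≠ ∞ := measure_closedBall_lt_top.ne
  have hvol : volume (cylP d α ρ t x) = ENNReal.ofReal (ρ ^ α) * V := by
    rw [hset, Measure.volume_eq_prod, Measure.prod_prod, Real.volume_Icc]
    congr 2
    ring
  have hlin : ∫⁻ z in cylP d α ρ t x, f z =
      (∫⁻ s in Icc t (t + ρ ^ α), g s) * V := by
    calc ∫⁻ z in cylP d α ρ t x, f z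
        = ∫⁻ z in cylP d α ρ t x, g z.1 := lintegral_congr_ae (ae_restrict_of_ae hf)
      _ = ∫⁻ z in Icc t (t + ρ ^ α) ×ˢ Metric.closedBall x ρ, g z.1 := by rw [hset]
      _ = (∫⁻ s in Icc t (t + ρ ^ α), g s) * V := by
          rw [Measure.volume_eq_prod, ← Measure.prod_restrict,
            lintegral_prod (fun z => g z.1)
              ((Measurable.comp hg measurable_fst :
                Measurable (fun z : ℝ × Spc d => g z.1)).aemeasurable)]
          simp only [lintegral_const, Measure.restrict_apply_univ]
          rw [lintegral_mul_const _ hg]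
  have hne0 : ENNReal.ofReal (ρ ^ α) ≠ 0 :=
    (ENNReal.ofReal_pos.2 (Real.rpow_pos_of_pos hρ α)).ne'
  rw [cylAvg, hvol, hlin, ENNReal.mul_inv (Or.inl hne0) (Or.inl ENNReal.ofReal_ne_top)]
  set I := ∫⁻ s in Icc t (t + ρ ^ α), g s
  calc (ENNReal.ofReal (ρ ^ α))⁻¹ * V⁻¹ * (I * V)
      = (ENNReal.ofReal (ρ ^ α))⁻¹ * I * (V⁻¹ * V) := by ring
    _ = (ENNReal.ofReal (ρ ^ α))⁻¹ * I := by
        rw [ENNReal.inv_mul_cancel hV0 hVtop, mul_one]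

/-- Real-number core identity. -/
lemma real_eval {α q K ρ : ℝ} (hα0 : 0 < α) (hq0 : 0 < q) (hqα : q < α)
    (hK : 0 < K) (hρ : 0 < ρ) :
    ρ * ((ρ ^ α)⁻¹ * (K ^ q * (2 * (ρ ^ α / 2) ^ (1 - q / α) / (1 - q / α)))) ^ (1/q)
      = (2 * (1/2 : ℝ) ^ (1 - q / α) / (1 - q / α)) ^ (1/q) * K := by
  set p := q / α with hp
  set tt := 1 - p with htt
  set X := 2 * (1/2 : ℝ) ^ tt / tt with hX
  set c := X ^ (1/q) with hc
  have hp0 : 0 < p := by positivity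
  have hp1 : p < 1 := by rw [hp, div_lt_one hα0]; exact hqα
  have htt0 : 0 < tt := by rw [htt]; linarith
  have hL : 0 < ρ ^ α := Real.rpow_pos_of_pos hρ α
  have hXpos : 0 < X := by positivity
  have hcq : c ^ q = X := by
    rw [hc, ← Real.rpow_mul hXpos.le, one_div_mul_cancel hq0.ne', Real.rpow_one]
  have hap : α * (-p) = -q := by rw [hp]; field_simp
  have h1 : (ρ ^ α)⁻¹ * (ρ ^ α) ^ tt = ρ ^ (-q) := by
    rw [← Real.rpow_neg_one (ρ ^ α), ← Real.rpow_add hL,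
      show (-1 : ℝ) + tt = -p by rw [htt]; ring, ← Real.rpow_mul hρ.le, hap]
  have h2 : (ρ ^ α / 2) ^ tt = (ρ ^ α) ^ tt * (1/2 : ℝ) ^ tt := by
    rw [show ρ ^ α / 2 = ρ ^ α * (1/2) by ring, Real.mul_rpow hL.le (by norm_num)]
  have h3 : (ρ ^ α)⁻¹ * (K ^ q * (2 * (ρ ^ α / 2) ^ tt / tt)) = (ρ⁻¹ * (c * K)) ^ q := by
    rw [h2]
    have hre : (ρ ^ α)⁻¹ * (K ^ q * (2 * ((ρ ^ α) ^ tt * (1/2 : ℝ) ^ tt) / tt))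
        = ((ρ ^ α)⁻¹ * (ρ ^ α) ^ tt) * (K ^ q * X) := by rw [hX]; ring
    rw [hre, h1, Real.mul_rpow (by positivity) (by positivity),
      Real.mul_rpow (by positivity) hK.le, Real.inv_rpow hρ.le,
      Real.rpow_neg hρ.le, hcq]
    ring
  rw [h3, ← Real.rpow_mul (by positivity), mul_one_div_cancel hq0.ne', Real.rpow_one,
    ← mul_assoc, mul_inv_cancel₀ hρ.ne', one_mul]

/-- ENNReal version. -/
lemma ennreal_eval {α q K ρ : ℝ} (hα0 : 0 < α) (hq0 : 0 < q) (hqα : q < α)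
    (hK : 0 < K) (hρ : 0 < ρ) :
    ENNReal.ofReal ρ * ((ENNReal.ofReal (ρ ^ α))⁻¹ *
        (ENNReal.ofReal (K ^ q) *
          ENNReal.ofReal (2 * (ρ ^ α / 2) ^ (1 - q / α) / (1 - q / α)))) ^ (1/q)
      = ENNReal.ofReal ((2 * (1/2 : ℝ) ^ (1 - q / α) / (1 - q / α)) ^ (1/q) * K) := by
  have hp1 : q / α < 1 := by rw [div_lt_one hα0]; exact hqα
  have htt0 : (0:ℝ) < 1 - q / α := by linarith
  have hL : 0 < ρ ^ α := Real.rpow_pos_of_pos hρ α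
  rw [← ENNReal.ofReal_inv_of_pos hL,
    ← ENNReal.ofReal_mul (by positivity : (0:ℝ) ≤ K ^ q),
    ← ENNReal.ofReal_mul (by positivity : (0:ℝ) ≤ (ρ ^ α)⁻¹),
    ENNReal.ofReal_rpow_of_nonneg (by positivity) (by positivity : (0:ℝ) ≤ 1/q),
    ← ENNReal.ofReal_mul hρ.le, real_eval hα0 hq0 hqα hK hρ]

end Stmt15Aux

/-- Example (E.1), temporal case: for `b(t,x) = κ |t - t₀|^{-(α-1)/α}`
(any value at `t = t₀`), the Morrey norm `‖b^{1/(α-1)}‖_{E_{1+ε}}` equals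
`c κ^{1/(α-1)}` with `c` depending only on `α` and `ε`. -/
theorem stmt_15 (α ε : ℝ) (hα1 : 1 < α) (hα2 : α < 2) (hε1 : 0 < ε) (hε2 : ε < α - 1) :
    ∃ c : ℝ, 0 < c ∧
      ∀ (d : ℕ), 2 ≤ d → ∀ (κ t₀ : ℝ), 0 < κ →
      ∀ (b : ℝ × Spc d → ℝ≥0∞),
        (∀ (t : ℝ) (x : Spc d), t ≠ t₀ →
          b (t, x) = ENNReal.ofReal (κ * |t - t₀| ^ (-(α - 1) / α))) →
        morreyE d α (1 + ε) (fun z => b z ^ (1 / (α - 1))) =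
          ENNReal.ofReal (c * κ ^ (1 / (α - 1))) := by
  have hα0 : (0:ℝ) < α := by linarith
  have hα1' : (0:ℝ) < α - 1 := by linarith
  set q : ℝ := 1 + ε with hq
  have hq0 : 0 < q := by rw [hq]; linarith
  have hqα : q < α := by rw [hq]; linarith
  set p : ℝ := q / α with hpdef
  have hp0 : 0 < p := by positivity
  have hp1 : p < 1 := by rw [hpdef, div_lt_one hα0]; exact hqα
  set tt : ℝ := 1 - p with httdef
  have htt0 : 0 < tt := by rw [httdef]; linarith
  set c : ℝ := (2 * (1/2 : ℝ) ^ tt / tt) ^ (1/q) with hcdef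
  have hc0 : 0 < c := by
    rw [hcdef]
    positivity
  refine ⟨c, hc0, ?_⟩
  intro d hd κ t₀ hκ b hb
  set K : ℝ := κ ^ (1/(α-1)) with hKdef
  have hK0 : 0 < K := Real.rpow_pos_of_pos hκ _
  set g : ℝ → ℝ≥0∞ :=
    fun s => ENNReal.ofReal (K ^ q) * ENNReal.ofReal (|s - t₀| ^ (-p)) with hgdef
  have hgm : Measurable g := by
    apply Measurable.const_mul
    exact ENNReal.measurable_ofReal.comp
      (((measurable_id.sub_const t₀).abs).pow measurable_const)
  -- a.e. identity for the integrand
  have hnull : (volume : Measure (ℝ × Spc d)) {z | z.1 = t₀} = 0 := by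
    have hs : {z : ℝ × Spc d | z.1 = t₀} = ({t₀} : Set ℝ) ×ˢ (univ : Set (Spc d)) := by
      ext z
      simp only [Set.mem_prod, Set.mem_singleton_iff, Set.mem_univ, and_true,
        Set.mem_setOf_eq]
    rw [hs, Measure.volume_eq_prod, Measure.prod_prod, Real.volume_singleton, zero_mul]
  have hae : ∀ᵐ z : ℝ × Spc d ∂volume, (b z ^ (1/(α-1))) ^ q = g z.1 := by
    have h1 : ∀ᵐ z : ℝ × Spc d ∂volume, z.1 ≠ t₀ := by
      rw [ae_iff]
      simpa only [ne_eq, not_not] using hnull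
    filter_upwards [h1] with z hz
    have hbz : b z = ENNReal.ofReal (κ * |z.1 - t₀| ^ (-(α - 1) / α)) := hb z.1 z.2 hz
    have hr0 : 0 < 1/(α-1) * q := by positivity
    have hu : (0:ℝ) ≤ |z.1 - t₀| := abs_nonneg _
    rw [hbz, ← ENNReal.rpow_mul,
      ENNReal.ofReal_rpow_of_nonneg (by positivity) hr0.le,
      Real.mul_rpow hκ.le (Real.rpow_nonneg hu _), ← Real.rpow_mul hu,
      show -(α - 1) / α * (1/(α-1) * q) = -p by
        rw [hpdef]; field_simp,
      Real.rpow_mul hκ.le, ← hKdef,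
      ENNReal.ofReal_mul (by positivity), hgdef]
  -- formula for each term of the supremum
  have hterm : ∀ ρ : ℝ, 0 < ρ → ∀ t : ℝ, ∀ x : Spc d,
      ENNReal.ofReal ρ *
          (cylAvg d α ρ t x (fun z => (b z ^ (1/(α-1))) ^ q)) ^ (1/q)
        = ENNReal.ofReal ρ * ((ENNReal.ofReal (ρ ^ α))⁻¹ *
            (ENNReal.ofReal (K ^ q) *
              ENNReal.ofReal (∫ s in (t - t₀)..(t - t₀ + ρ ^ α), |s| ^ (-p)))) ^ (1/q) := by
    intro ρ hρ t x
    have hL0 : (0:ℝ) ≤ ρ ^ α := (Real.rpow_pos_of_pos hρ α).le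
    rw [Stmt15Aux.cylAvg_eq hρ t x g hgm _ hae]
    congr 2
    rw [hgdef]
    simp only []
    rw [lintegral_const_mul' _ _ ENNReal.ofReal_ne_top,
      Stmt15Aux.lintegral_time hp1 t₀ t (ρ ^ α) hL0]
  -- upper bound
  have hub : ∀ ρ : ℝ, 0 < ρ → ∀ t : ℝ, ∀ x : Spc d,
      ENNReal.ofReal ρ *
          (cylAvg d α ρ t x (fun z => (b z ^ (1/(α-1))) ^ q)) ^ (1/q)
        ≤ ENNReal.ofReal (c * K) := by
    intro ρ hρ t x
    have hLpos : (0:ℝ) < ρ ^ α := Real.rpow_pos_of_pos hρ α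
    rw [hterm ρ hρ t x]
    have hint_le : ∫ s in (t - t₀)..(t - t₀ + ρ ^ α), |s| ^ (-p)
        ≤ 2 * (ρ ^ α / 2) ^ tt / tt := by
      rw [httdef]
      exact Stmt15Aux.integral_abs_rpow_le hp0 hp1 hLpos (t - t₀)
    calc ENNReal.ofReal ρ * ((ENNReal.ofReal (ρ ^ α))⁻¹ *
            (ENNReal.ofReal (K ^ q) *
              ENNReal.ofReal (∫ s in (t - t₀)..(t - t₀ + ρ ^ α), |s| ^ (-p)))) ^ (1/q)
        ≤ ENNReal.ofReal ρ * ((ENNReal.ofReal (ρ ^ α))⁻¹ *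
            (ENNReal.ofReal (K ^ q) *
              ENNReal.ofReal (2 * (ρ ^ α / 2) ^ tt / tt))) ^ (1/q) := by
          gcongr
      _ = ENNReal.ofReal (c * K) := by
          rw [hcdef, httdef, hpdef]
          exact Stmt15Aux.ennreal_eval hα0 hq0 hqα hK0 hρ
  -- the supremum is attained at ρ = 1, t = t₀ - 1/2
  have heq1 : ENNReal.ofReal (1:ℝ) *
        (cylAvg d α 1 (t₀ - 1/2) 0 (fun z => (b z ^ (1/(α-1))) ^ q)) ^ (1/q)
      = ENNReal.ofReal (c * K) := by
    rw [hterm 1 one_pos (t₀ - 1/2) 0]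
    have h1 : (1:ℝ) ^ α = 1 := Real.one_rpow α
    rw [h1, show t₀ - 1/2 - t₀ = -(1/2 : ℝ) by ring]
    have hcent : ∫ s in (-(1/2 : ℝ))..(-(1/2 : ℝ) + 1), |s| ^ (-p)
        = 2 * ((1:ℝ) / 2) ^ tt / tt := by
      rw [httdef]
      exact Stmt15Aux.integral_abs_rpow_center hp0 hp1 one_pos
    rw [hcent]
    simp only [ENNReal.ofReal_one, one_mul, inv_one]
    rw [← ENNReal.ofReal_mul (by positivity : (0:ℝ) ≤ K ^ q),
      ENNReal.ofReal_rpow_of_nonneg (by positivity) (by positivity : (0:ℝ) ≤ 1/q)]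
    congr 1
    have hX : (0:ℝ) < 2 * ((1:ℝ)/2) ^ tt / tt := by positivity
    rw [Real.mul_rpow (by positivity) hX.le,
      ← Real.rpow_mul (by positivity : (0:ℝ) ≤ K), mul_one_div_cancel hq0.ne',
      Real.rpow_one, hcdef]
    rw [show ((1:ℝ)/2) = (1/2 : ℝ) by norm_num]
    ring
  -- conclude
  apply le_antisymm
  · rw [morreyE]
    exact iSup_le fun ρ => iSup_le fun hρ => iSup_le fun t => iSup_le fun x => hub ρ hρ t x
  · rw [morreyE]
    refine le_iSup_of_le (1:ℝ) (le_iSup_of_le one_pos (le_iSup_of_le (t₀ - 1/2)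
      (le_iSup_of_le (0 : Spc d) ?_)))
    exact le_of_eq heq1.symm
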